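/- Let p, q ≥ 1, let G be a split graph with clique C = {c_1,…,c_p} and independent set U = {u_1,…,u_q}, and let G′ be the split reduction graph of G. Then G′ is a split graph whose vertex set is partitioned into the clique D and the independent set W ∪ S (in particular G′ is chordal, i.e. has no induced cycle of length at least four), and there exists a tree whose vertex set is exactly the set of maximal cliques of G′, which satisfies the clique-intersection property, and in which every vertex has degree at most 3. -/

import Mathlib

/-- A graph is chordal if it has no induced cycle of length at least four. -/
def Chordal {V : Type*} (H : SimpleGraph V) : Prop :=
  ∀ m : ℕ, 4 ≤ m → IsEmpty (SimpleGraph.cycleGraph m ↪g H)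

/-- A maximal clique of a graph, as a finset. -/
def IsMaxClique {V : Type*} (H : SimpleGraph V) (K : Finset V) : Prop :=
  H.IsClique (K : Set V) ∧ ∀ K' : Finset V, H.IsClique (K' : Set V) → K ⊆ K' → K' = K

/-- The clique-intersection property for a tree on the maximal cliques of `H`. -/
def CliqueIntersectionProperty {V : Type*} [DecidableEq V] (H : SimpleGraph V)
    (T : SimpleGraph {K : Finset V // IsMaxClique H K}) : Prop :=
  ∀ (K K' : {K : Finset V // IsMaxClique H K}) (p : T.Walk K K'), p.IsPath →
    ∀ L ∈ p.support, K.1 ∩ K'.1 ⊆ L.1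

/-- Vertices of the split reduction graph: the clique `D` (`p` vertices), the
independent set `W` (`q` vertices) and the special vertices `S` (`q` vertices). -/
inductive SVert (p q : ℕ) : Type where
  | d : Fin p → SVert p q
  | w : Fin q → SVert p q
  | s : Fin q → SVert p q
deriving DecidableEq

/-- The split reduction graph `G'` of a split graph `G` on `Fin p ⊕ Fin q`
(`Sum.inl` is the clique `C`, `Sum.inr` the independent set `U`). -/
def splitRed (p q : ℕ) (G : SimpleGraph (Fin p ⊕ Fin q)) : SimpleGraph (SVert p q) :=
  SimpleGraph.fromRel (fun a b =>
    match a, b with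
    | .d i, .d j => i ≠ j
    | .d i, .w j => G.Adj (Sum.inl i) (Sum.inr j)
    | .s _, .d _ => True
    | _, _ => False)

/-- `v` belongs to the clique part `D` of the split reduction graph. -/
def SVert.isD {p q : ℕ} : SVert p q → Prop
  | .d _ => True
  | _ => False

namespace SplitAux

open SimpleGraph

variable {p q : ℕ} {G : SimpleGraph (Fin p ⊕ Fin q)}



lemma adj_dd {i j : Fin p} : (splitRed p q G).Adj (.d i) (.d j) ↔ i ≠ j := by
  simp [splitRed, SimpleGraph.fromRel_adj]; aesop

lemma adj_dw {i : Fin p} {j : Fin q} :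
    (splitRed p q G).Adj (.d i) (.w j) ↔ G.Adj (Sum.inl i) (Sum.inr j) := by
  simp [splitRed, SimpleGraph.fromRel_adj]

lemma adj_ds {i : Fin p} {j : Fin q} : (splitRed p q G).Adj (.d i) (.s j) := by
  simp [splitRed, SimpleGraph.fromRel_adj]

lemma not_adj_nonD {a b : SVert p q} (ha : ¬ a.isD) (hb : ¬ b.isD) :
    ¬ (splitRed p q G).Adj a b := by
  cases a <;> cases b <;> simp [SVert.isD] at ha hb ⊢ <;>
    simp [splitRed, SimpleGraph.fromRel_adj]

lemma fin_sub_val {m : ℕ} (a b : Fin m) : (a - b).val = (m - b.val + a.val) % m := by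
  rw [Fin.sub_def]

lemma cyc_adj_succ {m a : ℕ} (h : a + 1 < m) :
    (cycleGraph m).Adj ⟨a, by omega⟩ ⟨a + 1, h⟩ := by
  rw [cycleGraph_adj']
  right
  rw [fin_sub_val]
  simp only
  have h1 : m - a + (a + 1) = m + 1 := by omega
  rw [h1, Nat.add_mod_left, Nat.mod_eq_of_lt (by omega)]

lemma cyc_adj_wrap {m : ℕ} (h : 2 ≤ m) :
    (cycleGraph m).Adj ⟨0, by omega⟩ ⟨m - 1, by omega⟩ := by
  rw [cycleGraph_adj']
  left
  rw [fin_sub_val]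
  simp only
  have h1 : m - (m - 1) + 0 = 1 := by omega
  rw [h1, Nat.mod_eq_of_lt (by omega)]

lemma cyc_not_adj {m a b : ℕ} (ha : a < m) (hb : b < m) (h1 : a + 2 ≤ b) (h2 : b + 2 ≤ a + m) :
    ¬ (cycleGraph m).Adj ⟨a, ha⟩ ⟨b, hb⟩ := by
  rw [cycleGraph_adj']
  push_neg
  constructor
  · rw [fin_sub_val]; simp only
    have e : m - b + a = m - (b - a) := by omega
    rw [e, Nat.mod_eq_of_lt (by omega)]
    omega
  · rw [fin_sub_val]; simp only
    have e : m - a + b = (b - a) + m := by omega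
    rw [e, Nat.add_mod_right, Nat.mod_eq_of_lt (by omega)]
    omega

lemma chordal_splitRed : Chordal (splitRed p q G) := by
  intro m hm
  constructor
  intro f
  have hAdjD : ∀ i j : Fin m, (cycleGraph m).Adj i j → (f i).isD ∨ (f j).isD := by
    intro i j hij
    by_contra hc
    push_neg at hc
    exact not_adj_nonD hc.1 hc.2 (f.map_adj_iff.mpr hij)
  have hNAdj : ∀ i j : Fin m, i ≠ j → ¬ (cycleGraph m).Adj i j →
      ¬ ((f i).isD ∧ (f j).isD) := by
    rintro i j hne hna ⟨hi, hj⟩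
    have hfi : ∃ a, f i = SVert.d a := by
      cases h : f i <;> rw [h] at hi <;> simp [SVert.isD] at hi <;> exact ⟨_, rfl⟩
    have hfj : ∃ b, f j = SVert.d b := by
      cases h : f j <;> rw [h] at hj <;> simp [SVert.isD] at hj <;> exact ⟨_, rfl⟩
    obtain ⟨a, ha⟩ := hfi
    obtain ⟨b, hb⟩ := hfj
    have hab : a ≠ b := by
      rintro rfl
      exact hne (f.injective (ha.trans hb.symm))
    apply hna
    rw [← f.map_adj_iff, ha, hb]
    exact adj_dd.mpr hab
  rcases (by omega : m = 4 ∨ 5 ≤ m) with rfl | h5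
  · have A01 : (f ⟨0, by omega⟩).isD ∨ (f ⟨1, by omega⟩).isD :=
      hAdjD _ _ (cyc_adj_succ (by omega))
    have A12 : (f ⟨1, by omega⟩).isD ∨ (f ⟨2, by omega⟩).isD :=
      hAdjD _ _ (cyc_adj_succ (by omega))
    have A23 : (f ⟨2, by omega⟩).isD ∨ (f ⟨3, by omega⟩).isD :=
      hAdjD _ _ (cyc_adj_succ (by omega))
    have A30 : (f ⟨0, by omega⟩).isD ∨ (f ⟨3, by omega⟩).isD :=
      hAdjD _ _ (cyc_adj_wrap (by omega))
    have N02 : ¬ ((f ⟨0, by omega⟩).isD ∧ (f ⟨2, by omega⟩).isD) :=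
      hNAdj _ _ (by simp only [ne_eq, Fin.mk.injEq]; omega)
        (cyc_not_adj _ _ (by omega) (by omega))
    have N13 : ¬ ((f ⟨1, by omega⟩).isD ∧ (f ⟨3, by omega⟩).isD) :=
      hNAdj _ _ (by simp only [ne_eq, Fin.mk.injEq]; omega)
        (cyc_not_adj _ _ (by omega) (by omega))
    rcases A01 with h0 | h1
    · rcases A23 with h2 | h3
      · exact N02 ⟨h0, h2⟩
      · rcases A12 with h1 | h2
        · exact N13 ⟨h1, h3⟩
        · exact N02 ⟨h0, h2⟩
    · rcases A23 with h2 | h3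
      · rcases A30 with h0 | h3
        · exact N02 ⟨h0, h2⟩
        · exact N13 ⟨h1, h3⟩
      · exact N13 ⟨h1, h3⟩
  · have A01 : (f ⟨0, by omega⟩).isD ∨ (f ⟨1, by omega⟩).isD :=
      hAdjD _ _ (cyc_adj_succ (by omega))
    have A23 : (f ⟨2, by omega⟩).isD ∨ (f ⟨3, by omega⟩).isD :=
      hAdjD _ _ (cyc_adj_succ (by omega))
    have A34 : (f ⟨3, by omega⟩).isD ∨ (f ⟨4, by omega⟩).isD :=
      hAdjD _ _ (cyc_adj_succ (by omega))
    have N02 : ¬ ((f ⟨0, by omega⟩).isD ∧ (f ⟨2, by omega⟩).isD) :=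
      hNAdj _ _ (by simp only [ne_eq, Fin.mk.injEq]; omega)
        (cyc_not_adj _ _ (by omega) (by omega))
    have N03 : ¬ ((f ⟨0, by omega⟩).isD ∧ (f ⟨3, by omega⟩).isD) :=
      hNAdj _ _ (by simp only [ne_eq, Fin.mk.injEq]; omega)
        (cyc_not_adj _ _ (by omega) (by omega))
    have N13 : ¬ ((f ⟨1, by omega⟩).isD ∧ (f ⟨3, by omega⟩).isD) :=
      hNAdj _ _ (by simp only [ne_eq, Fin.mk.injEq]; omega)
        (cyc_not_adj _ _ (by omega) (by omega))
    have N14 : ¬ ((f ⟨1, by omega⟩).isD ∧ (f ⟨4, by omega⟩).isD) :=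
      hNAdj _ _ (by simp only [ne_eq, Fin.mk.injEq]; omega)
        (cyc_not_adj _ _ (by omega) (by omega))
    rcases A01 with h0 | h1
    · rcases A23 with h2 | h3
      · exact N02 ⟨h0, h2⟩
      · exact N03 ⟨h0, h3⟩
    · rcases A34 with h3 | h4
      · exact N13 ⟨h1, h3⟩
      · exact N14 ⟨h1, h4⟩

lemma acyclic_of_rank {V : Type*} (G : SimpleGraph V) (rank : V → ℕ)
    (h2 : ∀ v a b, G.Adj v a → G.Adj v b → rank a ≤ rank v → rank b ≤ rank v → a = b) :
    G.IsAcyclic := by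
  intro v c hc
  classical
  obtain ⟨u, hu, hmax⟩ :=
    Finset.exists_max_image c.support.toFinset rank
      ⟨v, by simp [Walk.start_mem_support]⟩
  simp only [List.mem_toFinset] at hu hmax
  have hc' := hc.rotate hu
  set c' := c.rotate u hu with hc'def
  have hsup : ∀ x ∈ c'.support, rank x ≤ rank u := by
    intro x hx
    apply hmax
    rw [Walk.support_eq_cons c', List.mem_cons] at hx
    rcases hx with rfl | hx
    · exact hu
    · rw [Walk.support_eq_cons c]
      right
      exact (Walk.support_rotate c u hu).mem_iff.mp hx
  have hnn : ¬ c'.Nil := by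
    intro hnil
    exact hc'.ne_nil (Walk.nil_iff_eq_nil.mp hnil)
  obtain ⟨b, hub, q, hq⟩ := Walk.not_nil_iff.mp hnn
  have hbu : b ≠ u := fun h => G.irrefl (h ▸ hub)
  have hqnn : ¬ q.reverse.Nil := Walk.not_nil_of_ne (Ne.symm hbu)
  obtain ⟨a, hua, q2, hq2⟩ := Walk.not_nil_iff.mp hqnn
  have hmem : s(u, a) ∈ q.edges := by
    have : s(u, a) ∈ q.reverse.edges := by rw [hq2]; simp
    rwa [Walk.edges_reverse, List.mem_reverse] at this
  have htrail : q.IsTrail ∧ s(u, b) ∉ q.edges := by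
    have := hc'.isTrail
    rwa [hq, Walk.isTrail_cons] at this
  have hab : a = b := by
    apply h2 u a b hua hub
    · apply hsup
      have ha : a ∈ q.reverse.support := by rw [hq2]; simp
      rw [Walk.support_reverse, List.mem_reverse] at ha
      rw [hq]
      simp [Walk.support_cons, ha]
    · apply hsup
      rw [hq]
      simp [Walk.support_cons, Walk.start_mem_support]
  exact htrail.2 (hab ▸ hmem)

open Classical in
noncomputable def Kw (G : SimpleGraph (Fin p ⊕ Fin q)) (j : Fin q) : Finset (SVert p q) :=
  insert (SVert.w j)
    ((Finset.univ.filter fun i => G.Adj (Sum.inl i) (Sum.inr j)).image SVert.d)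

noncomputable def Ks (p q : ℕ) (j : Fin q) : Finset (SVert p q) :=
  insert (SVert.s j) (Finset.univ.image SVert.d)

lemma mem_Kw {j : Fin q} {x : SVert p q} :
    x ∈ Kw G j ↔ x = .w j ∨ ∃ i, x = .d i ∧ G.Adj (Sum.inl i) (Sum.inr j) := by
  simp [Kw]
  aesop

lemma mem_Ks {j : Fin q} {x : SVert p q} :
    x ∈ Ks p q j ↔ x = .s j ∨ ∃ i, x = .d i := by
  simp [Ks]
  aesop

lemma isClique_Kw {j : Fin q} : (splitRed p q G).IsClique (Kw G j : Set (SVert p q)) := by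
  intro x hx y hy hxy
  have hx' := mem_Kw.mp (Finset.mem_coe.mp hx)
  have hy' := mem_Kw.mp (Finset.mem_coe.mp hy)
  rcases hx' with rfl | ⟨i, rfl, hi⟩ <;> rcases hy' with rfl | ⟨i', rfl, hi'⟩
  · exact absurd rfl hxy
  · exact (adj_dw.mpr hi').symm
  · exact adj_dw.mpr hi
  · exact adj_dd.mpr (by rintro rfl; exact hxy rfl)

lemma isClique_Ks {j : Fin q} : (splitRed p q G).IsClique (Ks p q j : Set (SVert p q)) := by
  intro x hx y hy hxy
  rw [Finset.mem_coe] at hx hy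
  have hx' := mem_Ks.mp hx
  have hy' := mem_Ks.mp hy
  rcases hx' with rfl | ⟨i, rfl⟩ <;> rcases hy' with rfl | ⟨i', rfl⟩
  · exact absurd rfl hxy
  · exact (adj_ds (G := G)).symm
  · exact adj_ds
  · exact adj_dd.mpr (by rintro rfl; exact hxy rfl)

lemma maxKw (j : Fin q) : IsMaxClique (splitRed p q G) (Kw G j) := by
  refine ⟨isClique_Kw, fun K' hK' hsub => ?_⟩
  apply Finset.Subset.antisymm _ hsub
  intro x hx
  rw [mem_Kw]
  by_cases hxw : x = SVert.w j
  · exact Or.inl hxw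
  · have hadj : (splitRed p q G).Adj x (.w j) :=
      hK' (Finset.mem_coe.mpr hx) (Finset.mem_coe.mpr (hsub (by rw [mem_Kw]; left; rfl))) hxw
    right
    cases x with
    | d i => exact ⟨i, rfl, adj_dw.mp hadj⟩
    | w j' => exact absurd hadj (not_adj_nonD (by simp [SVert.isD]) (by simp [SVert.isD]))
    | s j' => exact absurd hadj (not_adj_nonD (by simp [SVert.isD]) (by simp [SVert.isD]))

lemma maxKs (j : Fin q) : IsMaxClique (splitRed p q G) (Ks p q j) := by
  refine ⟨isClique_Ks, fun K' hK' hsub => ?_⟩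
  apply Finset.Subset.antisymm _ hsub
  intro x hx
  rw [mem_Ks]
  by_cases hxs : x = SVert.s j
  · exact Or.inl hxs
  · have hadj : (splitRed p q G).Adj x (.s j) :=
      hK' (Finset.mem_coe.mpr hx) (Finset.mem_coe.mpr (hsub (by rw [mem_Ks]; left; rfl))) hxs
    right
    cases x with
    | d i => exact ⟨i, rfl⟩
    | w j' => exact absurd hadj (not_adj_nonD (by simp [SVert.isD]) (by simp [SVert.isD]))
    | s j' => exact absurd hadj (not_adj_nonD (by simp [SVert.isD]) (by simp [SVert.isD]))

lemma maxclique_w {K : Finset (SVert p q)} (hK : IsMaxClique (splitRed p q G) K)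
    {j : Fin q} (hw : SVert.w j ∈ K) : K = Kw G j := by
  have hsub : K ⊆ Kw G j := by
    intro x hx
    rw [mem_Kw]
    by_cases hxw : x = SVert.w j
    · exact Or.inl hxw
    · have hadj : (splitRed p q G).Adj x (.w j) :=
        hK.1 (Finset.mem_coe.mpr hx) (Finset.mem_coe.mpr hw) hxw
      right
      cases x with
      | d i => exact ⟨i, rfl, adj_dw.mp hadj⟩
      | w j' => exact absurd hadj (not_adj_nonD (by simp [SVert.isD]) (by simp [SVert.isD]))
      | s j' => exact absurd hadj (not_adj_nonD (by simp [SVert.isD]) (by simp [SVert.isD]))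
  exact (hK.2 (Kw G j) isClique_Kw hsub).symm

lemma maxclique_s {K : Finset (SVert p q)} (hK : IsMaxClique (splitRed p q G) K)
    {j : Fin q} (hs : SVert.s j ∈ K) : K = Ks p q j := by
  have hsub : K ⊆ Ks p q j := by
    intro x hx
    rw [mem_Ks]
    by_cases hxs : x = SVert.s j
    · exact Or.inl hxs
    · have hadj : (splitRed p q G).Adj x (.s j) :=
        hK.1 (Finset.mem_coe.mpr hx) (Finset.mem_coe.mpr hs) hxs
      right
      cases x with
      | d i => exact ⟨i, rfl⟩
      | w j' => exact absurd hadj (not_adj_nonD (by simp [SVert.isD]) (by simp [SVert.isD]))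
      | s j' => exact absurd hadj (not_adj_nonD (by simp [SVert.isD]) (by simp [SVert.isD]))
  exact (hK.2 (Ks p q j) isClique_Ks hsub).symm

lemma maxclique_cases (hq : 1 ≤ q) {K : Finset (SVert p q)}
    (hK : IsMaxClique (splitRed p q G) K) :
    (∃ j, K = Kw G j) ∨ (∃ j, K = Ks p q j) := by
  by_cases hnd : ∃ x ∈ K, ¬ x.isD
  · obtain ⟨x, hx, hxd⟩ := hnd
    cases x with
    | d i => simp [SVert.isD] at hxd
    | w j => exact Or.inl ⟨j, maxclique_w hK hx⟩
    | s j => exact Or.inr ⟨j, maxclique_s hK hx⟩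
  · push_neg at hnd
    exfalso
    set j0 : Fin q := ⟨0, hq⟩
    have hclq : (splitRed p q G).IsClique ((insert (SVert.s j0) K : Finset (SVert p q)) : Set (SVert p q)) := by
      intro x hx y hy hxy
      rw [Finset.coe_insert, Set.mem_insert_iff] at hx hy
      rcases hx with rfl | hx <;> rcases hy with rfl | hy
      · exact absurd rfl hxy
      · have := hnd y hy
        cases y with
        | d i => exact (adj_ds (G := G)).symm
        | w j => simp [SVert.isD] at this
        | s j => simp [SVert.isD] at this
      · have := hnd x hx
        cases x with
        | d i => exact adj_ds
        | w j => simp [SVert.isD] at this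
        | s j => simp [SVert.isD] at this
      · exact hK.1 hx hy hxy
    have heq := hK.2 _ hclq (Finset.subset_insert _ _)
    have : SVert.s j0 ∈ K := heq ▸ Finset.mem_insert_self _ _
    have := hnd _ this
    simp [SVert.isD] at this


def tAdjRel (q : ℕ) : (Fin q ⊕ Fin q) → (Fin q ⊕ Fin q) → Prop
  | .inl j, .inr j' => j = j'
  | .inr j, .inr j' => j.val + 1 = j'.val
  | _, _ => False

def Tidx (q : ℕ) : SimpleGraph (Fin q ⊕ Fin q) := SimpleGraph.fromRel (tAdjRel q)

lemma tidx_adj_inl {q : ℕ} {j : Fin q} {y : Fin q ⊕ Fin q}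
    (h : (Tidx q).Adj (.inl j) y) : y = .inr j := by
  rw [Tidx, SimpleGraph.fromRel_adj] at h
  obtain ⟨hne, h | h⟩ := h
  · cases y with
    | inl j' => simp [tAdjRel] at h
    | inr j' =>
      have hj : j = j' := by simpa [tAdjRel] using h
      exact congrArg Sum.inr hj.symm
  · cases y with
    | inl j' => simp [tAdjRel] at h
    | inr j' => simp [tAdjRel] at h

lemma tidx_adj_inr {q : ℕ} {j : Fin q} {y : Fin q ⊕ Fin q}
    (h : (Tidx q).Adj (.inr j) y) :
    y = .inl j ∨ ∃ j' : Fin q, y = .inr j' ∧ (j.val + 1 = j'.val ∨ j'.val + 1 = j.val) := by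
  rw [Tidx, SimpleGraph.fromRel_adj] at h
  obtain ⟨hne, h | h⟩ := h
  · cases y with
    | inl j' => simp [tAdjRel] at h
    | inr j' => exact Or.inr ⟨j', rfl, Or.inl h⟩
  · cases y with
    | inl j' =>
      have hj : j' = j := by simpa [tAdjRel] using h
      exact Or.inl (by rw [hj])
    | inr j' => exact Or.inr ⟨j', rfl, Or.inr h⟩

lemma tidx_adj_wl {q : ℕ} (j : Fin q) : (Tidx q).Adj (.inl j) (.inr j) := by
  rw [Tidx, SimpleGraph.fromRel_adj]
  exact ⟨by simp, Or.inl rfl⟩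

lemma tidx_adj_spine {q : ℕ} {j j' : Fin q} (h : j.val + 1 = j'.val) :
    (Tidx q).Adj (.inr j) (.inr j') := by
  rw [Tidx, SimpleGraph.fromRel_adj]
  refine ⟨by simp [Fin.ext_iff]; omega, Or.inl h⟩

lemma tidx_connected {q : ℕ} (hq : 1 ≤ q) : (Tidx q).Connected := by
  have key : ∀ n (j : Fin q), j.val = n → (Tidx q).Reachable (.inr j) (.inr ⟨0, hq⟩) := by
    intro n
    induction n with
    | zero =>
      intro j hj
      rw [show j = ⟨0, hq⟩ from Fin.ext hj]
    | succ n ih =>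
      intro j hj
      have hn : n < q := by omega
      have hadj : (Tidx q).Adj (.inr (⟨n, hn⟩ : Fin q)) (.inr j) := tidx_adj_spine (by simp [hj])
      exact hadj.symm.reachable.trans (ih ⟨n, hn⟩ rfl)
  have reach : ∀ x : Fin q ⊕ Fin q, (Tidx q).Reachable x (.inr ⟨0, hq⟩) := by
    intro x
    cases x with
    | inl j => exact (tidx_adj_wl j).reachable.trans (key j.val j rfl)
    | inr j => exact key j.val j rfl
  have : Nonempty (Fin q ⊕ Fin q) := ⟨.inr ⟨0, hq⟩⟩
  exact Connected.mk (fun x y => (reach x).trans (reach y).symm)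

def rnk (q : ℕ) : Fin q ⊕ Fin q → ℕ
  | .inl j => 2 * j.val + 2
  | .inr j => 2 * j.val + 1

lemma tidx_h2 {q : ℕ} (x y z : Fin q ⊕ Fin q) (hxy : (Tidx q).Adj x y)
    (hxz : (Tidx q).Adj x z) (h1 : rnk q y ≤ rnk q x) (h2 : rnk q z ≤ rnk q x) : y = z := by
  cases x with
  | inl j =>
    rw [tidx_adj_inl hxy, tidx_adj_inl hxz]
  | inr j =>
    rcases tidx_adj_inr hxy with rfl | ⟨j', rfl, hj'⟩
    · simp [rnk] at h1
    rcases tidx_adj_inr hxz with rfl | ⟨j'', rfl, hj''⟩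
    · simp [rnk] at h2
    simp [rnk] at h1 h2
    congr 1
    apply Fin.ext
    omega

lemma path_support_cases {V : Type*} {T : SimpleGraph V} {K K' : V} (p : T.Walk K K') :
    p.IsPath → ∀ L ∈ p.support, L = K ∨ L = K' ∨ ∃ A B, A ≠ B ∧ T.Adj L A ∧ T.Adj L B := by
  induction p with
  | nil =>
    intro _ L hL
    rw [Walk.support_nil, List.mem_singleton] at hL
    exact Or.inl hL
  | @cons u v w h q ih =>
    intro hp L hL
    rw [Walk.support_cons, List.mem_cons] at hL
    rcases hL with rfl | hL
    · exact Or.inl rfl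
    rcases ih hp.of_cons L hL with rfl | rfl | ⟨A, B, hAB⟩
    · by_cases hvw : L = w
      · exact Or.inr (Or.inl hvw)
      · have hqnn : ¬ q.Nil := Walk.not_nil_of_ne hvw
        obtain ⟨b, hvb, q2, hq2⟩ := Walk.not_nil_iff.mp hqnn
        have hKq : u ∉ q.support := ((Walk.cons_isPath_iff h q).mp hp).2
        have hbq : b ∈ q.support := by
          rw [hq2]; simp [Walk.support_cons, Walk.start_mem_support]
        exact Or.inr (Or.inr ⟨u, b, fun hub => hKq (hub ▸ hbq), h.symm, hvb⟩)
    · exact Or.inr (Or.inl rfl)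
    · exact Or.inr (Or.inr ⟨A, B, hAB⟩)



noncomputable def eFun (G : SimpleGraph (Fin p ⊕ Fin q)) :
    Fin q ⊕ Fin q → {K : Finset (SVert p q) // IsMaxClique (splitRed p q G) K}
  | .inl j => ⟨Kw G j, maxKw j⟩
  | .inr j => ⟨Ks p q j, maxKs j⟩

lemma w_mem_Kw {j : Fin q} : SVert.w j ∈ Kw G j := mem_Kw.mpr (Or.inl rfl)

lemma s_mem_Ks {j : Fin q} : SVert.s j ∈ Ks p q j := mem_Ks.mpr (Or.inl rfl)

lemma eFun_bijective (hq : 1 ≤ q) : Function.Bijective (eFun G) := by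
  constructor
  · intro a b hab
    have h1 : (eFun G a).1 = (eFun G b).1 := congrArg _ hab
    cases a with
    | inl j =>
      cases b with
      | inl j' =>
        have hm : SVert.w j ∈ Kw G j' := by
          have : (eFun G (Sum.inl j)).1 = Kw G j' := h1
          rw [show (eFun G (Sum.inl j)).1 = Kw G j from rfl] at this
          rw [← this]
          exact w_mem_Kw
        rcases mem_Kw.mp hm with h | ⟨i, h, _⟩
        · cases h; rfl
        · simp at h
      | inr j' =>
        exfalso
        have hm : SVert.s j' ∈ Kw G j := by
          have : Kw G j = Ks p q j' := h1
          rw [this]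
          exact s_mem_Ks
        rcases mem_Kw.mp hm with h | ⟨i, h, _⟩ <;> simp at h
    | inr j =>
      cases b with
      | inl j' =>
        exfalso
        have hm : SVert.s j ∈ Kw G j' := by
          have : Ks p q j = Kw G j' := h1
          rw [← this]
          exact s_mem_Ks
        rcases mem_Kw.mp hm with h | ⟨i, h, _⟩ <;> simp at h
      | inr j' =>
        have hm : SVert.s j ∈ Ks p q j' := by
          have : Ks p q j = Ks p q j' := h1
          rw [← this]
          exact s_mem_Ks
        rcases mem_Ks.mp hm with h | ⟨i, h⟩
        · cases h; rfl
        · simp at h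
  · intro K
    rcases maxclique_cases hq K.2 with ⟨j, hj⟩ | ⟨j, hj⟩
    · exact ⟨.inl j, Subtype.ext hj.symm⟩
    · exact ⟨.inr j, Subtype.ext hj.symm⟩

end SplitAux

theorem splitReduction_chordal_cliqueTree_degree_le_three
    (p q : ℕ) (hp : 1 ≤ p) (hq : 1 ≤ q) (G : SimpleGraph (Fin p ⊕ Fin q))
    (hC : ∀ i j : Fin p, i ≠ j → G.Adj (Sum.inl i) (Sum.inl j))
    (hU : ∀ i j : Fin q, ¬ G.Adj (Sum.inr i) (Sum.inr j)) :
    (splitRed p q G).IsClique {v : SVert p q | v.isD} ∧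
    (∀ a b : SVert p q, ¬ a.isD → ¬ b.isD → ¬ (splitRed p q G).Adj a b) ∧
    Chordal (splitRed p q G) ∧
    ∃ T : SimpleGraph {K : Finset (SVert p q) // IsMaxClique (splitRed p q G) K},
      T.IsTree ∧ CliqueIntersectionProperty (splitRed p q G) T ∧
      ∀ K, (T.neighborSet K).ncard ≤ 3 := by

  classical
  obtain ⟨hclq, hind, hch⟩ :
      (splitRed p q G).IsClique {v : SVert p q | v.isD} ∧
      (∀ a b : SVert p q, ¬ a.isD → ¬ b.isD → ¬ (splitRed p q G).Adj a b) ∧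
      Chordal (splitRed p q G) := by
    refine ⟨?_, fun a b ha hb => SplitAux.not_adj_nonD ha hb, SplitAux.chordal_splitRed⟩
    intro x hx y hy hxy
    simp only [Set.mem_setOf_eq] at hx hy
    cases x with
    | d i =>
      cases y with
      | d i' => exact SplitAux.adj_dd.mpr (by rintro rfl; exact hxy rfl)
      | w _ => simp [SVert.isD] at hy
      | s _ => simp [SVert.isD] at hy
    | w _ => simp [SVert.isD] at hx
    | s _ => simp [SVert.isD] at hx
  refine ⟨hclq, hind, hch, ?_⟩
  set E : (Fin q ⊕ Fin q) ≃ {K : Finset (SVert p q) // IsMaxClique (splitRed p q G) K} :=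
    Equiv.ofBijective _ (SplitAux.eFun_bijective (G := G) hq) with hE
  refine ⟨SimpleGraph.comap (fun K => E.symm K) (SplitAux.Tidx q), ⟨?_, ?_⟩, ?_, ?_⟩
  · -- connected
    have iso : (SimpleGraph.comap (fun K => E.symm K) (SplitAux.Tidx q)) ≃g SplitAux.Tidx q :=
      ⟨E.symm, Iff.rfl⟩
    exact iso.connected_iff.mpr (SplitAux.tidx_connected hq)
  · -- acyclic
    apply SplitAux.acyclic_of_rank _ (fun K => SplitAux.rnk q (E.symm K))
    intro v a b hva hvb h1 h2
    exact E.symm.injective (SplitAux.tidx_h2 _ _ _ hva hvb h1 h2)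
  · -- clique intersection property
    intro K K' pa hpa L hL
    by_cases hKK : K = K'
    · subst hKK
      rw [SimpleGraph.Walk.isPath_iff_eq_nil.mp hpa] at hL
      rw [SimpleGraph.Walk.support_nil, List.mem_singleton] at hL
      subst hL
      exact fun x hx => (Finset.mem_inter.mp hx).1
    · rcases SplitAux.path_support_cases pa hpa L hL with rfl | rfl | ⟨A, B, hAB, hLA, hLB⟩
      · exact fun x hx => (Finset.mem_inter.mp hx).1
      · exact fun x hx => (Finset.mem_inter.mp hx).2
      · have hLA' : (SplitAux.Tidx q).Adj (E.symm L) (E.symm A) := hLA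
        have hLB' : (SplitAux.Tidx q).Adj (E.symm L) (E.symm B) := hLB
        obtain ⟨j, hj⟩ : ∃ j, E.symm L = Sum.inr j := by
          cases h : E.symm L with
          | inr j => exact ⟨j, rfl⟩
          | inl j =>
            exfalso
            rw [h] at hLA' hLB'
            have h1 := SplitAux.tidx_adj_inl hLA'
            have h2 := SplitAux.tidx_adj_inl hLB'
            exact hAB (E.symm.injective (h1.trans h2.symm))
        have hL1 : L.1 = SplitAux.Ks p q j := by
          have : L = E (Sum.inr j) := by
            rw [← hj, Equiv.apply_symm_apply]
          rw [this]
          rfl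
        rw [hL1]
        intro x hx
        rw [Finset.mem_inter] at hx
        rw [SplitAux.mem_Ks]
        cases x with
        | d i => exact Or.inr ⟨i, rfl⟩
        | w j' =>
          exfalso
          have e1 : K.1 = SplitAux.Kw G j' := SplitAux.maxclique_w K.2 hx.1
          have e2 : K'.1 = SplitAux.Kw G j' := SplitAux.maxclique_w K'.2 hx.2
          exact hKK (Subtype.ext (e1.trans e2.symm))
        | s j' =>
          exfalso
          have e1 : K.1 = SplitAux.Ks p q j' := SplitAux.maxclique_s K.2 hx.1
          have e2 : K'.1 = SplitAux.Ks p q j' := SplitAux.maxclique_s K'.2 hx.2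
          exact hKK (Subtype.ext (e1.trans e2.symm))
  · -- degree bound
    intro K
    cases h : E.symm K with
    | inl j =>
      have hsub : (SimpleGraph.comap (fun K => E.symm K) (SplitAux.Tidx q)).neighborSet K ⊆
          {E (Sum.inr j)} := by
        intro K' hK'
        have hadj : (SplitAux.Tidx q).Adj (E.symm K) (E.symm K') := hK'
        rw [h] at hadj
        have h2 := SplitAux.tidx_adj_inl hadj
        simp only [Set.mem_singleton_iff]
        exact (E.apply_symm_apply K').symm.trans (congrArg E h2)
      have hb := Set.ncard_le_ncard hsub (Set.finite_singleton _)
      rw [Set.ncard_singleton] at hb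
      omega
    | inr j =>
      have hjq : j.val < q := j.isLt
      set jm : Fin q := ⟨j.val - 1, by omega⟩ with hjm
      set jp : Fin q := if h' : j.val + 1 < q then ⟨j.val + 1, h'⟩ else j with hjp
      have hsub : (SimpleGraph.comap (fun K => E.symm K) (SplitAux.Tidx q)).neighborSet K ⊆
          {E (Sum.inl j), E (Sum.inr jm), E (Sum.inr jp)} := by
        intro K' hK'
        have hadj : (SplitAux.Tidx q).Adj (E.symm K) (E.symm K') := hK'
        rw [h] at hadj
        rcases SplitAux.tidx_adj_inr hadj with h2 | ⟨j', h2, hc | hc⟩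
        · left
          exact (E.apply_symm_apply K').symm.trans (congrArg E h2)
        · right; right
          have : j' = jp := by
            rw [hjp, dif_pos (by omega : j.val + 1 < q)]
            exact Fin.ext (show j'.val = j.val + 1 by omega)
          rw [← this]
          exact (E.apply_symm_apply K').symm.trans (congrArg E h2)
        · right; left
          have : j' = jm := Fin.ext (by simp [hjm]; omega)
          rw [← this]
          exact (E.apply_symm_apply K').symm.trans (congrArg E h2)
      have hfin : ({E (Sum.inl j), E (Sum.inr jm), E (Sum.inr jp)} :
          Set {K : Finset (SVert p q) // IsMaxClique (splitRed p q G) K}).Finite :=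
        (((Set.finite_singleton _).insert _).insert _)
      have hb := Set.ncard_le_ncard hsub hfin
      have b1 := Set.ncard_insert_le (E (Sum.inl j))
        ({E (Sum.inr jm), E (Sum.inr jp)} : Set _)
      have b2 := Set.ncard_insert_le (E (Sum.inr jm)) ({E (Sum.inr jp)} : Set _)
      have b3 := Set.ncard_singleton (E (Sum.inr jp))
      omega
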